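/- Let Z_t = ∑_{i,j ∈ [n]} [ε² ∧ (x_i(t) − x_j(t))²] ∨ (ε²·𝟙{(i,j) ∉ E}). Then (Z_t)_{t ≥ 0} is a nonnegative nonincreasing sequence and hence converges as t → ∞. -/

import Mathlib

open Finset
open scoped Classical

/-- The threshold graph `G_t`: social neighbors whose garbage differs by at most `ε`. -/
def Gt {n : ℕ} (G : SimpleGraph (Fin n)) (x : ℕ → Fin n → ℝ) (ε : ℝ) (t : ℕ) :
    SimpleGraph (Fin n) where
  Adj i j := G.Adj i j ∧ |x t i - x t j| ≤ ε
  symm := by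
    constructor
    intro i j h
    exact ⟨h.1.symm, by rw [abs_sub_comm]; exact h.2⟩
  loopless := by
    constructor
    intro i h
    exact G.irrefl h.1

/-- `|E_t|`: the number of edges of `G_t`. -/
noncomputable def Ecard {n : ℕ} (G : SimpleGraph (Fin n)) (x : ℕ → Fin n → ℝ) (ε : ℝ)
    (t : ℕ) : ℕ :=
  (Gt G x ε t).edgeSet.ncard

/-- `N_i(t)`: the neighbors of `i` in `G_t`, as a finset. -/
noncomputable def Nb {n : ℕ} (G : SimpleGraph (Fin n)) (x : ℕ → Fin n → ℝ) (ε : ℝ)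
    (t : ℕ) (i : Fin n) : Finset (Fin n) :=
  Finset.univ.filter fun j => (Gt G x ε t).Adj i j

/-- The update rule of the garbage disposal game. -/
def Update {n : ℕ} (G : SimpleGraph (Fin n)) (x : ℕ → Fin n → ℝ) (ε : ℝ) : Prop :=
  ∀ t i,
    x (t + 1) i =
      (if (Gt G x ε t).edgeSet.Nonempty then (1 : ℝ) else 0) / (Ecard G x ε t : ℝ) *
          ∑ j ∈ Nb G x ε t i, x t j +
        (1 - ((Nb G x ε t i).card : ℝ) / (Ecard G x ε t : ℝ) *
            (if (Gt G x ε t).edgeSet.Nonempty then (1 : ℝ) else 0)) * x t i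

/-- The Lyapunov functional `Z_t`. -/
noncomputable def Z {n : ℕ} (G : SimpleGraph (Fin n)) (x : ℕ → Fin n → ℝ) (ε : ℝ)
    (t : ℕ) : ℝ :=
  ∑ i, ∑ j,
    max (min (ε ^ 2) ((x t i - x t j) ^ 2)) (ε ^ 2 * if ¬ G.Adj i j then 1 else 0)

variable {n : ℕ} (G : SimpleGraph (Fin n)) (x : ℕ → Fin n → ℝ) (ε : ℝ) (t : ℕ)

lemma mem_Nb {i j : Fin n} : j ∈ Nb G x ε t i ↔ (Gt G x ε t).Adj i j := by
  simp [Nb]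

lemma Tsymm (f : Fin n → Fin n → ℝ) :
    ∑ i, ∑ j ∈ Nb G x ε t i, f i j = ∑ i, ∑ j ∈ Nb G x ε t i, f j i := by
  simp only [Nb, Finset.sum_filter]
  rw [Finset.sum_comm]
  refine Finset.sum_congr rfl fun i _ => Finset.sum_congr rfl fun j _ => ?_
  by_cases h : (Gt G x ε t).Adj i j
  · rw [if_pos ((Gt G x ε t).adj_symm h), if_pos h]
  · rw [if_neg (fun h' => h ((Gt G x ε t).adj_symm h')), if_neg h]

lemma card_Nb_le (i : Fin n) : (Nb G x ε t i).card ≤ Ecard G x ε t := by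
  have hfin : (Gt G x ε t).edgeSet.Finite := Set.toFinite _
  rw [Ecard, Set.ncard_eq_toFinset_card _ hfin]
  apply Finset.card_le_card_of_injOn (fun j => s(i, j))
  · intro j hj
    rw [Finset.mem_coe, Set.Finite.mem_toFinset, SimpleGraph.mem_edgeSet]
    exact (mem_Nb G x ε t).mp hj
  · intro a _ b _ hab
    exact Sym2.congr_right.mp hab

set_option maxHeartbeats 4000000 in
lemma key (hupd : Update G x ε) :
    ∑ i, ∑ j ∈ Nb G x ε t i, (x (t+1) i - x (t+1) j)^2
      ≤ ∑ i, ∑ j ∈ Nb G x ε t i, (x t i - x t j)^2 := by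
  by_cases h : (Gt G x ε t).edgeSet.Nonempty
  · -- nontrivial case
    have hfin : (Gt G x ε t).edgeSet.Finite := Set.toFinite _
    have hm : 0 < Ecard G x ε t := by
      rw [Ecard]; exact (Set.ncard_pos hfin).mpr h
    set M : ℝ := (Ecard G x ε t : ℝ) with hMdef
    have hM0 : M ≠ 0 := by
      rw [hMdef]
      exact Nat.cast_ne_zero.mpr hm.ne'
    set X : Fin n → ℝ := x t with hX
    set y : Fin n → ℝ := fun i => ∑ j ∈ Nb G x ε t i, (X j - X i) with hy
    have hysum : ∀ i, ∑ j ∈ Nb G x ε t i, (X i - X j) = -(y i) := by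
      intro i
      rw [hy, ← Finset.sum_neg_distrib]
      simp
    have hX' : ∀ i, x (t+1) i = X i + M⁻¹ * y i := by
      intro i
      have hyi : y i = (∑ j ∈ Nb G x ε t i, X j) - ((Nb G x ε t i).card : ℝ) * X i := by
        simp only [hy]
        rw [Finset.sum_sub_distrib, Finset.sum_const, nsmul_eq_mul]
      rw [hupd t i, if_pos h, hyi, ← hMdef, ← hX]
      field_simp
      ring
    set Y : ℝ := ∑ i, (y i)^2 with hYdef
    have hYpos : 0 ≤ Y := Finset.sum_nonneg fun i _ => sq_nonneg _
    -- S1 = -2Y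
    have h1 : ∑ i, ∑ j ∈ Nb G x ε t i, (X i - X j) * y i = -Y := by
      rw [hYdef, ← Finset.sum_neg_distrib]
      refine Finset.sum_congr rfl fun i _ => ?_
      rw [← Finset.sum_mul, hysum i]
      ring
    have h2 : ∑ i, ∑ j ∈ Nb G x ε t i, (X i - X j) * y j = Y := by
      rw [Tsymm G x ε t (fun i j => (X i - X j) * y j)]
      rw [hYdef]
      refine Finset.sum_congr rfl fun i _ => ?_
      rw [← Finset.sum_mul]
      have : ∑ j ∈ Nb G x ε t i, (X j - X i) = y i := rfl
      rw [this]; ring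
    have hS1 : ∑ i, ∑ j ∈ Nb G x ε t i, (X i - X j) * (y i - y j) = -2*Y := by
      have : ∀ i j : Fin n, (X i - X j) * (y i - y j)
          = (X i - X j) * y i - (X i - X j) * y j := fun i j => by ring
      simp only [this, Finset.sum_sub_distrib]
      rw [h1, h2]; ring
    -- S2 ≤ 4 M Y
    have hdeg : ∀ i, ∑ j ∈ Nb G x ε t i, (y i)^2 ≤ M * (y i)^2 := by
      intro i
      rw [Finset.sum_const, nsmul_eq_mul]
      apply mul_le_mul_of_nonneg_right _ (sq_nonneg _)
      rw [hMdef]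
      exact_mod_cast card_Nb_le G x ε t i
    have hS2 : ∑ i, ∑ j ∈ Nb G x ε t i, (y i - y j)^2 ≤ 4 * M * Y := by
      have step1 : ∑ i, ∑ j ∈ Nb G x ε t i, (y i - y j)^2
          ≤ ∑ i, ∑ j ∈ Nb G x ε t i, (2*(y i)^2 + 2*(y j)^2) := by
        refine Finset.sum_le_sum fun i _ => Finset.sum_le_sum fun j _ => ?_
        nlinarith [sq_nonneg (y i + y j)]
      have step2 : ∑ i, ∑ j ∈ Nb G x ε t i, (2*(y i)^2 + 2*(y j)^2)
          = 2 * (∑ i, ∑ j ∈ Nb G x ε t i, (y i)^2)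
            + 2 * (∑ i, ∑ j ∈ Nb G x ε t i, (y j)^2) := by
        simp only [Finset.sum_add_distrib, Finset.mul_sum]
      have step3 : ∑ i, ∑ j ∈ Nb G x ε t i, (y j)^2
          = ∑ i, ∑ j ∈ Nb G x ε t i, (y i)^2 :=
        Tsymm G x ε t (fun i j => (y j)^2)
      have step4 : ∑ i, ∑ j ∈ Nb G x ε t i, (y i)^2 ≤ M * Y := by
        rw [hYdef, Finset.mul_sum]
        exact Finset.sum_le_sum fun i _ => hdeg i
      calc ∑ i, ∑ j ∈ Nb G x ε t i, (y i - y j)^2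
          ≤ _ := step1
        _ = _ := step2
        _ ≤ 2 * (M*Y) + 2 * (M*Y) := by
            rw [step3]
            have := step4
            linarith
        _ = 4 * M * Y := by ring
    -- expand
    have expand : ∑ i, ∑ j ∈ Nb G x ε t i, (x (t+1) i - x (t+1) j)^2
        = (∑ i, ∑ j ∈ Nb G x ε t i, (X i - X j)^2)
          + (2 * M⁻¹) * (∑ i, ∑ j ∈ Nb G x ε t i, (X i - X j) * (y i - y j))
          + (M⁻¹)^2 * (∑ i, ∑ j ∈ Nb G x ε t i, (y i - y j)^2) := by
      simp only [hX']
      simp only [Finset.mul_sum, ← Finset.sum_add_distrib]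
      refine Finset.sum_congr rfl fun i _ => Finset.sum_congr rfl fun j _ => ?_
      ring
    rw [expand, hS1]
    set S2 : ℝ := ∑ i, ∑ j ∈ Nb G x ε t i, (y i - y j)^2 with hS2def
    have e : (M⁻¹)^2 * (4*M*Y) = 4 * M⁻¹ * Y := by
      field_simp
    have h5 : (M⁻¹)^2 * S2 ≤ 4 * M⁻¹ * Y := by
      rw [← e]
      exact mul_le_mul_of_nonneg_left hS2 (sq_nonneg _)
    linarith
  · -- empty case: x (t+1) = x t
    have hX' : ∀ i, x (t+1) i = x t i := by
      intro i
      rw [hupd t i, if_neg h]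
      simp
    simp only [hX']
    exact le_refl _

lemma Z_nonneg : 0 ≤ Z G x ε t := by
  refine Finset.sum_nonneg fun i _ => Finset.sum_nonneg fun j _ => ?_
  exact le_trans (le_min (sq_nonneg _) (sq_nonneg _)) (le_max_left _ _)

set_option maxHeartbeats 4000000 in
lemma Z_step (hε : 0 < ε) (hupd : Update G x ε) : Z G x ε (t + 1) ≤ Z G x ε t := by
  have hZ1 : Z G x ε (t+1) ≤ ∑ i, ∑ j, (if (Gt G x ε t).Adj i j
      then (x (t+1) i - x (t+1) j)^2
      else max (min (ε^2) ((x t i - x t j)^2))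
        (ε^2 * if ¬ G.Adj i j then 1 else 0)) := by
    rw [Z]
    refine Finset.sum_le_sum fun i _ => Finset.sum_le_sum fun j _ => ?_
    by_cases hij : (Gt G x ε t).Adj i j
    · rw [if_pos hij]
      have h0 : (ε^2 * if ¬G.Adj i j then (1:ℝ) else 0) = 0 := by simp [hij.1]
      rw [h0]
      exact max_le (min_le_right _ _) (sq_nonneg _)
    · rw [if_neg hij]
      by_cases hG : G.Adj i j
      · have h0 : (ε^2 * if ¬G.Adj i j then (1:ℝ) else 0) = 0 := by simp [hG]
        have hlt : ε < |x t i - x t j| := by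
          by_contra hle
          push_neg at hle
          exact hij ⟨hG, hle⟩
        have hsq : ε^2 ≤ (x t i - x t j)^2 := by
          rw [← sq_abs (x t i - x t j)]
          exact pow_le_pow_left₀ hε.le hlt.le 2
        rw [h0, min_eq_left hsq, max_eq_left (sq_nonneg _)]
        exact max_le (min_le_left _ _) (sq_nonneg _)
      · have h1 : (if ¬G.Adj i j then (1:ℝ) else 0) = 1 := if_pos hG
        simp only [h1, mul_one]
        exact max_le ((min_le_left _ _).trans (le_max_right _ _)) (le_max_right _ _)
  have hZ2 : Z G x ε t = ∑ i, ∑ j, (if (Gt G x ε t).Adj i j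
      then (x t i - x t j)^2
      else max (min (ε^2) ((x t i - x t j)^2))
        (ε^2 * if ¬ G.Adj i j then 1 else 0)) := by
    rw [Z]
    refine Finset.sum_congr rfl fun i _ => Finset.sum_congr rfl fun j _ => ?_
    by_cases hij : (Gt G x ε t).Adj i j
    · rw [if_pos hij]
      have h0 : (ε^2 * if ¬G.Adj i j then (1:ℝ) else 0) = 0 := by simp [hij.1]
      have hle : (x t i - x t j)^2 ≤ ε^2 := by
        rw [← sq_abs]
        exact pow_le_pow_left₀ (abs_nonneg _) hij.2 2
      rw [h0, min_eq_right hle, max_eq_left (sq_nonneg _)]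
    · rw [if_neg hij]
  have hsplit : ∀ f : Fin n → Fin n → ℝ,
      (∑ i, ∑ j, (if (Gt G x ε t).Adj i j then f i j
        else max (min (ε^2) ((x t i - x t j)^2))
          (ε^2 * if ¬ G.Adj i j then 1 else 0)))
      = (∑ i, ∑ j ∈ Nb G x ε t i, f i j)
        + ∑ i, ∑ j, (if (Gt G x ε t).Adj i j then 0
            else max (min (ε^2) ((x t i - x t j)^2))
              (ε^2 * if ¬ G.Adj i j then 1 else 0)) := by
    intro f
    simp only [Nb, Finset.sum_filter, ← Finset.sum_add_distrib]
    refine Finset.sum_congr rfl fun i _ => Finset.sum_congr rfl fun j _ => ?_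
    by_cases hij : (Gt G x ε t).Adj i j <;> simp [hij]
  refine hZ1.trans ?_
  rw [hZ2, hsplit (fun i j => (x (t+1) i - x (t+1) j)^2),
    hsplit (fun i j => (x t i - x t j)^2)]
  exact add_le_add_left (key G x ε t hupd) _

theorem Z_monotone_convergent' (hε : 0 < ε) (hx0 : ∀ i, 0 ≤ x 0 i) (hupd : Update G x ε) :
    (∀ t, 0 ≤ Z G x ε t) ∧ (∀ t, Z G x ε (t + 1) ≤ Z G x ε t) ∧
      ∃ L : ℝ, Filter.Tendsto (fun t => Z G x ε t) Filter.atTop (nhds L) := by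
  refine ⟨fun t => Z_nonneg G x ε t, fun t => Z_step G x ε t hε hupd, ?_⟩
  have hant : Antitone (fun t => Z G x ε t) :=
    antitone_nat_of_succ_le fun t => Z_step G x ε t hε hupd
  have hbdd : BddBelow (Set.range fun t => Z G x ε t) := by
    refine ⟨0, ?_⟩
    rintro y ⟨t, rfl⟩
    exact Z_nonneg G x ε t
  exact ⟨_, tendsto_atTop_ciInf hant hbdd⟩

/-- `(Z_t)` is nonnegative and nonincreasing, hence converges. -/
theorem Z_monotone_convergent {n : ℕ} (G : SimpleGraph (Fin n)) (x : ℕ → Fin n → ℝ)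
    (ε : ℝ) (hε : 0 < ε) (hx0 : ∀ i, 0 ≤ x 0 i) (hupd : Update G x ε) :
    (∀ t, 0 ≤ Z G x ε t) ∧ (∀ t, Z G x ε (t + 1) ≤ Z G x ε t) ∧
      ∃ L : ℝ, Filter.Tendsto (fun t => Z G x ε t) Filter.atTop (nhds L) := by
  exact Z_monotone_convergent' G x ε hε hx0 hupd
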